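/- Let (g_i)_{i=1}^n be independent standard Gaussian random variables and let (g_i*)_{i=1}^n be the nonincreasing rearrangement of (|g_i|)_{i=1}^n. Then there are absolute constants c, C > 0 such that for every 1 ≤ m ≤ n: c·√(m·log(en/m)) ≤ (E ∑_{i=1}^m (g_i*)²)^{1/2} ≤ C·√(m·log(en/m)). -/

import Mathlib

open MeasureTheory ProbabilityTheory
open Real

noncomputable section

namespace Stmt14

lemma gauss_eq : gaussianReal 0 1 =
    volume.withDensity (fun x => ((gaussianPDFReal 0 1 x).toNNReal : ENNReal)) := by
  rw [gaussianReal_of_var_ne_zero _ one_ne_zero]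
  rfl

lemma pdf_eq (x : ℝ) : gaussianPDFReal 0 1 x = (Real.sqrt (2 * π))⁻¹ * rexp (- x ^ 2 / 2) := by
  simp [gaussianPDFReal]

lemma integral_gauss_eq (g : ℝ → ℝ) :
    ∫ x, g x ∂(gaussianReal 0 1) = ∫ x, gaussianPDFReal 0 1 x * g x := by
  rw [gauss_eq, integral_withDensity_eq_integral_smul
    (by exact (measurable_gaussianPDFReal 0 1).real_toNNReal) g]
  congr 1
  ext x
  simp [NNReal.smul_def, Real.coe_toNNReal _ (gaussianPDFReal_nonneg 0 1 x)]

lemma integrable_gauss_iff {g : ℝ → ℝ} (hg : Measurable g) :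
    Integrable g (gaussianReal 0 1) ↔
      Integrable (fun x => gaussianPDFReal 0 1 x * g x) volume := by
  rw [gauss_eq, integrable_withDensity_iff_integrable_smul
    (by exact (measurable_gaussianPDFReal 0 1).real_toNNReal)]
  constructor <;> intro h <;> refine h.congr (Filter.Eventually.of_forall fun x => ?_) <;>
    simp [NNReal.smul_def, Real.coe_toNNReal _ (gaussianPDFReal_nonneg 0 1 x)]

lemma integrable_exp_quarter_sq : Integrable (fun x => rexp (x ^ 2 / 4)) (gaussianReal 0 1) := by
  rw [integrable_gauss_iff (by measurability)]
  have : (fun x => gaussianPDFReal 0 1 x * rexp (x ^ 2 / 4)) =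
      fun x => (Real.sqrt (2 * π))⁻¹ * rexp (-(4⁻¹ : ℝ) * x ^ 2) := by
    ext x
    rw [pdf_eq, mul_assoc, ← Real.exp_add]
    ring_nf
  rw [this]
  exact (integrable_exp_neg_mul_sq (by norm_num)).const_mul _

lemma integral_exp_quarter_sq_le : ∫ x, rexp (x ^ 2 / 4) ∂(gaussianReal 0 1) ≤ 2 := by
  rw [integral_gauss_eq]
  have : (fun x => gaussianPDFReal 0 1 x * rexp (x ^ 2 / 4)) =
      fun x => (Real.sqrt (2 * π))⁻¹ * rexp (-(4⁻¹ : ℝ) * x ^ 2) := by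
    ext x
    rw [pdf_eq, mul_assoc, ← Real.exp_add]
    ring_nf
  rw [this, integral_const_mul, integral_gaussian]
  rw [inv_mul_le_iff₀ (Real.sqrt_pos.2 (by positivity))]
  rw [show Real.sqrt (2*π) * 2 = Real.sqrt ((2*π) * 2^2) by
    rw [Real.sqrt_mul' _ (by norm_num : (0:ℝ) ≤ 2^2), Real.sqrt_sq (by norm_num : (0:ℝ) ≤ 2)]]
  apply Real.sqrt_le_sqrt
  rw [div_inv_eq_mul]
  nlinarith [Real.pi_pos]

lemma sq_le_exp (x : ℝ) : x ^ 2 ≤ 4 * rexp (x ^ 2 / 4) := by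
  nlinarith [Real.add_one_le_exp (x ^ 2 / 4)]

lemma integrable_sq_gauss : Integrable (fun x => x ^ 2) (gaussianReal 0 1) := by
  refine (integrable_exp_quarter_sq.const_mul 4).mono' (by measurability)
    (Filter.Eventually.of_forall fun x => ?_)
  rw [Real.norm_eq_abs, abs_of_nonneg (sq_nonneg x)]
  exact sq_le_exp x

lemma relu_le {s : ℝ} (hs : 0 ≤ s) (x : ℝ) :
    max (x ^ 2 - s) 0 ≤ 4 * rexp (-s / 4) * rexp (x ^ 2 / 4) := by
  rcases le_or_gt (x ^ 2 - s) 0 with h | h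
  · rw [max_eq_right h]; positivity
  · rw [max_eq_left h.le]
    have h1 : x ^ 2 - s ≤ 4 * rexp ((x ^ 2 - s) / 4) := by
      nlinarith [Real.add_one_le_exp ((x ^ 2 - s) / 4)]
    calc x ^ 2 - s ≤ 4 * rexp ((x ^ 2 - s) / 4) := h1
    _ = 4 * rexp (-s / 4) * rexp (x ^ 2 / 4) := by
        rw [mul_assoc, ← Real.exp_add]; ring_nf

lemma integrable_relu {s : ℝ} (hs : 0 ≤ s) :
    Integrable (fun x => max (x ^ 2 - s) 0) (gaussianReal 0 1) := by
  refine ((integrable_exp_quarter_sq.const_mul (4 * rexp (-s / 4)))).mono'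
    (by measurability) (Filter.Eventually.of_forall fun x => ?_)
  rw [Real.norm_eq_abs, abs_of_nonneg (le_max_right _ _)]
  exact relu_le hs x

lemma integral_relu_le {s : ℝ} (hs : 0 ≤ s) :
    ∫ x, max (x ^ 2 - s) 0 ∂(gaussianReal 0 1) ≤ 8 * rexp (-s / 4) := by
  calc ∫ x, max (x ^ 2 - s) 0 ∂(gaussianReal 0 1)
      ≤ ∫ x, 4 * rexp (-s / 4) * rexp (x ^ 2 / 4) ∂(gaussianReal 0 1) :=
        integral_mono (integrable_relu hs)
          (by simpa [mul_assoc] using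
            integrable_exp_quarter_sq.const_mul (4 * rexp (-s / 4))) (relu_le hs)
    _ = 4 * rexp (-s / 4) * ∫ x, rexp (x ^ 2 / 4) ∂(gaussianReal 0 1) := by
        rw [← integral_const_mul]
    _ ≤ 4 * rexp (-s / 4) * 2 := by
        have := integral_exp_quarter_sq_le
        nlinarith [Real.exp_pos (-s / 4)]
    _ = 8 * rexp (-s / 4) := by ring

lemma measurableSet_tail (t : ℝ) : MeasurableSet {x : ℝ | t ≤ |x|} :=
  measurableSet_le measurable_const measurable_abs

lemma sqrt_two_pi_le : Real.sqrt (2 * π) ≤ 3 := by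
  rw [show (3:ℝ) = Real.sqrt (3 ^ 2) by rw [Real.sqrt_sq]; norm_num]
  apply Real.sqrt_le_sqrt
  nlinarith [Real.pi_le_four]

lemma tail_ge {t : ℝ} (ht : 0 ≤ t) :
    rexp (-t ^ 2 - 1) / 3 ≤ ((gaussianReal 0 1) {x | t ≤ |x|}).toReal := by
  have hsub : Set.Icc t (t + 1) ⊆ {x | t ≤ |x|} := by
    intro x hx
    simp only [Set.mem_setOf_eq]
    rw [abs_of_nonneg (ht.trans hx.1)]
    exact hx.1
  have hmono := measure_mono (μ := gaussianReal 0 1) hsub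
  have hInt : rexp (-t ^ 2 - 1) / 3 ≤ ∫ x in Set.Icc t (t + 1), gaussianPDFReal 0 1 x := by
    have hconst : ∫ _x in Set.Icc t (t + 1), gaussianPDFReal 0 1 (t + 1) =
        gaussianPDFReal 0 1 (t + 1) := by
      rw [setIntegral_const, measureReal_def, Real.volume_Icc]
      simp
    have hmon : ∫ _x in Set.Icc t (t + 1), gaussianPDFReal 0 1 (t + 1) ≤
        ∫ x in Set.Icc t (t + 1), gaussianPDFReal 0 1 x := by
      refine setIntegral_mono_on (integrable_const _)
        ((integrable_gaussianPDFReal 0 1).integrableOn) measurableSet_Icc fun x hx => ?_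
      rw [pdf_eq, pdf_eq]
      have hx1 : x ^ 2 ≤ (t + 1) ^ 2 := by nlinarith [hx.1, hx.2]
      have : rexp (-(t + 1) ^ 2 / 2) ≤ rexp (-x ^ 2 / 2) := by
        apply Real.exp_le_exp.2; linarith
      have h2 : (0:ℝ) < (Real.sqrt (2 * π))⁻¹ := by
        rw [inv_pos]; exact Real.sqrt_pos.2 (by positivity)
      nlinarith
    refine le_trans ?_ (hconst ▸ hmon)
    rw [pdf_eq]
    have h1 : rexp (-t ^ 2 - 1) ≤ rexp (-(t + 1) ^ 2 / 2) := by
      apply Real.exp_le_exp.2; nlinarith [sq_nonneg (t - 1)]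
    have h2 : (Real.sqrt (2 * π))⁻¹ ≥ 3⁻¹ := by
      apply inv_anti₀ (by positivity) sqrt_two_pi_le
    have h3 := Real.exp_pos (-(t + 1) ^ 2 / 2)
    have h4 := Real.exp_pos (-t ^ 2 - 1)
    calc rexp (-t ^ 2 - 1) / 3 = 3⁻¹ * rexp (-t ^ 2 - 1) := by ring
    _ ≤ (Real.sqrt (2 * π))⁻¹ * rexp (-(t + 1) ^ 2 / 2) := by nlinarith
  have happ := gaussianReal_apply_eq_integral 0 one_ne_zero (Set.Icc t (t + 1))
  have htr : ((gaussianReal 0 1) (Set.Icc t (t + 1))).toReal =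
      ∫ x in Set.Icc t (t + 1), gaussianPDFReal 0 1 x := by
    rw [happ, ENNReal.toReal_ofReal]
    exact setIntegral_nonneg measurableSet_Icc fun x _ => gaussianPDFReal_nonneg 0 1 x
  calc rexp (-t ^ 2 - 1) / 3 ≤ ∫ x in Set.Icc t (t + 1), gaussianPDFReal 0 1 x := hInt
  _ = ((gaussianReal 0 1) (Set.Icc t (t + 1))).toReal := htr.symm
  _ ≤ ((gaussianReal 0 1) {x | t ≤ |x|}).toReal :=
      ENNReal.toReal_mono (measure_ne_top _ _) hmono

lemma lt_side {t : ℝ} (ht : 0 ≤ t) :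
    ((gaussianReal 0 1) {x | |x| < t}).toReal ≤ 1 - rexp (-t ^ 2 - 1) / 3 := by
  have hc : {x : ℝ | |x| < t} = {x : ℝ | t ≤ |x|}ᶜ := by
    ext x; simp [not_le]
  rw [hc, measure_compl (measurableSet_tail t) (measure_ne_top _ _)]
  rw [measure_univ, ENNReal.toReal_sub_of_le prob_le_one ENNReal.one_ne_top,
    ENNReal.toReal_one]
  linarith [tail_ge ht]

section Main

variable {Ω : Type} [MeasurableSpace Ω] {μ : Measure Ω} [IsProbabilityMeasure μ]

lemma map_integrable {X : Ω → ℝ} (hX : Measurable X) (hmap : μ.map X = gaussianReal 0 1)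
    {f : ℝ → ℝ} (hf : Measurable f) (hi : Integrable f (gaussianReal 0 1)) :
    Integrable (fun ω => f (X ω)) μ := by
  rw [← hmap] at hi
  exact (integrable_map_measure hf.aestronglyMeasurable hX.aemeasurable).1 hi

lemma map_integral {X : Ω → ℝ} (hX : Measurable X) (hmap : μ.map X = gaussianReal 0 1)
    {f : ℝ → ℝ} (hf : Measurable f) :
    ∫ ω, f (X ω) ∂μ = ∫ x, f x ∂(gaussianReal 0 1) := by
  rw [← hmap, integral_map hX.aemeasurable hf.aestronglyMeasurable]

lemma exp_sq_lt : rexp 1 < 2.7182818286 := Real.exp_one_lt_d9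

lemma one_sub_exp_neg_ge {y : ℝ} (h0 : 0 ≤ y) (h1 : y ≤ 1) : y / 2 ≤ 1 - rexp (-y) := by
  have h2 : rexp (-y) * rexp y = 1 := by rw [← Real.exp_add]; simp
  have h3 : 1 + y ≤ rexp y := by linarith [Real.add_one_le_exp y]
  have h4 : 0 < rexp (-y) := Real.exp_pos _
  have h5 : rexp (-y) ≤ 1 / (1 + y) := by
    rw [le_div_iff₀ (by linarith)]
    nlinarith
  have h6 : 1 / (1 + y) ≤ 1 - y / 2 := by
    rw [div_le_iff₀ (by linarith)]
    nlinarith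
  linarith

lemma key_max {n : ℕ} {g : Fin n → Ω → ℝ} (hg : ∀ i, Measurable (g i))
    (hind : iIndepFun g μ)
    (hmap : ∀ i, μ.map (g i) = gaussianReal 0 1)
    (S : Finset (Fin n)) (hS : S.Nonempty) :
    (1 + Real.log S.card) / 45 ≤ ∫ ω, S.sup' hS (fun i => g i ω ^ 2) ∂μ := by
  set k : ℝ := (S.card : ℝ) with hk_def
  have hk1 : 1 ≤ k := by
    simp only [hk_def, Nat.one_le_cast]
    exact Finset.card_pos.2 hS
  have hlogk : 0 ≤ Real.log k := Real.log_nonneg hk1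
  set t : ℝ := Real.sqrt (1 + Real.log k) with ht_def
  have ht0 : 0 ≤ t := Real.sqrt_nonneg _
  have ht2 : t ^ 2 = 1 + Real.log k := Real.sq_sqrt (by linarith)
  set M : Ω → ℝ := fun ω => S.sup' hS (fun i => g i ω ^ 2) with hM_def
  have hMnonneg : ∀ ω, 0 ≤ M ω := by
    intro ω
    obtain ⟨i0, hi0⟩ := hS
    exact le_trans (sq_nonneg (g i0 ω)) (Finset.le_sup' (fun i => g i ω ^ 2) hi0)
  have hsum_int : Integrable (fun ω => ∑ i ∈ S, g i ω ^ 2) μ := by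
    apply integrable_finset_sum
    intro i _
    exact map_integrable (hg i) (hmap i) (by measurability) integrable_sq_gauss
  have hMint : Integrable M μ := by
    refine hsum_int.mono' (Measurable.aestronglyMeasurable ?_)
      (Filter.Eventually.of_forall fun ω => ?_)
    · have hM : Measurable (S.sup' hS fun i x => g i x ^ 2) :=
        Finset.measurable_sup' hS fun i _ => (hg i).pow_const 2
      have heq : (fun ω => S.sup' hS fun i => g i ω ^ 2) = S.sup' hS fun i x => g i x ^ 2 := by
        ext ω; rw [Finset.sup'_apply]
      rw [hM_def, heq]; exact hM
    · rw [Real.norm_eq_abs, abs_of_nonneg (hMnonneg ω)]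
      apply Finset.sup'_le
      intro i hi
      exact Finset.single_le_sum (fun j _ => sq_nonneg (g j ω)) hi
  -- Markov
  have hmarkov := mul_meas_ge_le_integral_of_nonneg
    (Filter.Eventually.of_forall hMnonneg) hMint (t ^ 2)
  -- event identification
  set B : Set ℝ := {x : ℝ | |x| < t} with hB_def
  have hBmeas : MeasurableSet B := by
    rw [hB_def]; exact measurableSet_lt measurable_abs measurable_const
  clear_value k
  have hevent : {ω | t ^ 2 ≤ M ω} = (⋂ i ∈ S, g i ⁻¹' B)ᶜ := by
    ext ω
    simp only [Set.mem_setOf_eq, Set.mem_compl_iff, Set.mem_iInter, Set.mem_preimage,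
      hB_def, hM_def, Finset.le_sup'_iff, not_forall, not_lt]
    constructor
    · rintro ⟨i, hi, hti⟩
      refine ⟨i, hi, ?_⟩
      have h2 : t ^ 2 ≤ |g i ω| ^ 2 := by rwa [sq_abs]
      exact (pow_le_pow_iff_left₀ ht0 (abs_nonneg _) (two_ne_zero)).1 h2
    · rintro ⟨i, hi, hti⟩
      refine ⟨i, hi, ?_⟩
      calc t ^ 2 ≤ |g i ω| ^ 2 := pow_le_pow_left₀ ht0 hti 2
      _ = g i ω ^ 2 := sq_abs _
  have hprod : μ (⋂ i ∈ S, g i ⁻¹' B) = ((gaussianReal 0 1) B) ^ S.card := by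
    rw [hind.meas_biInter (fun i _ => ⟨B, hBmeas, rfl⟩)]
    rw [Finset.prod_congr rfl fun i _ => ?_, Finset.prod_const]
    rw [← Measure.map_apply (hg i) hBmeas, hmap i]
  set q : ℝ := ((gaussianReal 0 1) B).toReal with hq_def
  have hq0 : 0 ≤ q := ENNReal.toReal_nonneg
  set p : ℝ := rexp (-t ^ 2 - 1) / 3 with hp_def
  have hp0 : 0 < p := by positivity
  have hqp : q ≤ 1 - p := lt_side ht0
  have hmeasInter : MeasurableSet (⋂ i ∈ S, g i ⁻¹' B) :=
    Set.Finite.measurableSet_biInter S.finite_toSet fun i _ => (hg i) hBmeas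
  have hcompl : (μ {ω | t ^ 2 ≤ M ω}).toReal = 1 - q ^ S.card := by
    rw [hevent, measure_compl hmeasInter (measure_ne_top _ _), measure_univ,
      ENNReal.toReal_sub_of_le prob_le_one ENNReal.one_ne_top, ENNReal.toReal_one,
      hprod, ENNReal.toReal_pow]
  -- p value
  have hk0 : k ≠ 0 := by linarith
  have hexplog : rexp (-Real.log k) = k⁻¹ := by
    rw [Real.exp_neg, Real.exp_log (by linarith)]
  have hpval : p = rexp (-2) / (3 * k) := by
    rw [hp_def, ht2,
      show -(1 + Real.log k) - 1 = -2 + -Real.log k by ring, Real.exp_add, hexplog]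
    field_simp
  have hpk : p * k = rexp (-2) / 3 := by
    rw [hpval, div_mul_eq_mul_div, mul_comm (3:ℝ) k, ← div_div,
      mul_div_assoc, div_self hk0, mul_one]
  have hp1 : p ≤ 1 := by
    have h : rexp (-t ^ 2 - 1) ≤ 1 := Real.exp_le_one_iff.2 (by nlinarith)
    rw [hp_def]; linarith
  -- bound q ^ card
  have hqpow : q ^ S.card ≤ rexp (-(p * k)) := by
    calc q ^ S.card ≤ (1 - p) ^ S.card := pow_le_pow_left₀ hq0 hqp _
    _ ≤ rexp (-p) ^ S.card := by
        apply pow_le_pow_left₀ (by linarith)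
        have := Real.add_one_le_exp (-p); linarith
    _ = rexp (-p * S.card) := by rw [← Real.exp_nat_mul]; ring_nf
    _ = rexp (-(p * k)) := by rw [hk_def]; ring_nf
  have hy : rexp (-2) / 3 ≤ 1 := by
    have := Real.exp_le_one_iff.2 (show (-2:ℝ) ≤ 0 by norm_num)
    linarith
  have hy0 : 0 ≤ rexp (-2) / 3 := by positivity
  have hmu_ge : 1 / 45 ≤ (μ {ω | t ^ 2 ≤ M ω}).toReal := by
    rw [hcompl]
    have h1 : rexp (-2) / 3 / 2 ≤ 1 - rexp (-(rexp (-2) / 3)) := one_sub_exp_neg_ge hy0 hy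
    have h2 : q ^ S.card ≤ rexp (-(rexp (-2) / 3)) := by rw [← hpk]; exact hqpow
    -- need 1/45 ≤ exp(-2)/6, i.e. exp 2 ≤ 7.5
    have h3 : rexp 2 ≤ 7.5 := by
      have h := Real.exp_one_lt_d9
      have : rexp 2 = rexp 1 * rexp 1 := by rw [← Real.exp_add]; norm_num
      nlinarith [Real.exp_pos 1]
    have h4 : (1:ℝ) / 45 ≤ rexp (-2) / 6 := by
      rw [Real.exp_neg, div_le_div_iff₀ (by norm_num) (by norm_num)]
      rw [inv_mul_eq_div, le_div_iff₀ (Real.exp_pos 2)]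
      linarith
    linarith
  calc (1 + Real.log k) / 45 = t ^ 2 * (1 / 45) := by rw [ht2]; ring
  _ ≤ t ^ 2 * (μ {ω | t ^ 2 ≤ M ω}).toReal := by
      apply mul_le_mul_of_nonneg_left hmu_ge (by positivity)
  _ ≤ ∫ ω, M ω ∂μ := hmarkov

lemma sup'_sq_integrable {n : ℕ} {g : Fin n → Ω → ℝ} (hg : ∀ i, Measurable (g i))
    (hmap : ∀ i, μ.map (g i) = gaussianReal 0 1)
    (S : Finset (Fin n)) (hS : S.Nonempty) :
    Integrable (fun ω => S.sup' hS (fun i => g i ω ^ 2)) μ := by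
  have hsum_int : Integrable (fun ω => ∑ i ∈ S, g i ω ^ 2) μ := by
    apply integrable_finset_sum
    intro i _
    exact map_integrable (hg i) (hmap i) (by measurability) integrable_sq_gauss
  refine hsum_int.mono' (Measurable.aestronglyMeasurable ?_)
    (Filter.Eventually.of_forall fun ω => ?_)
  · have hM : Measurable (S.sup' hS fun i x => g i x ^ 2) :=
      Finset.measurable_sup' hS fun i _ => (hg i).pow_const 2
    have heq : (fun ω => S.sup' hS fun i => g i ω ^ 2) = S.sup' hS fun i x => g i x ^ 2 := by
      ext ω; rw [Finset.sup'_apply]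
    rw [heq]; exact hM
  · have hS2 := hS
    obtain ⟨i0, hi0⟩ := hS2
    have h0 : (0:ℝ) ≤ S.sup' hS fun i => g i ω ^ 2 :=
      le_trans (sq_nonneg (g i0 ω)) (Finset.le_sup' (fun i => g i ω ^ 2) hi0)
    rw [Real.norm_eq_abs, abs_of_nonneg h0]
    apply Finset.sup'_le
    intro i hi
    exact Finset.single_le_sum (fun j _ => sq_nonneg (g j ω)) hi

lemma integrable_relu_comp {X : Ω → ℝ} (hX : Measurable X) (hmapX : μ.map X = gaussianReal 0 1)
    {s : ℝ} (hs : 0 ≤ s) : Integrable (fun ω => max (X ω ^ 2 - s) 0) μ :=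
  map_integrable hX hmapX (by measurability) (integrable_relu hs)

lemma integral_relu_comp_le {X : Ω → ℝ} (hX : Measurable X) (hmapX : μ.map X = gaussianReal 0 1)
    {s : ℝ} (hs : 0 ≤ s) : ∫ ω, max (X ω ^ 2 - s) 0 ∂μ ≤ 8 * rexp (-s / 4) := by
  rw [map_integral hX hmapX (f := fun x => max (x ^ 2 - s) 0) (by measurability)]
  exact integral_relu_le hs

end Main

end Stmt14

open Stmt14 in
set_option maxHeartbeats 1000000 in
/-- For i.i.d. standard Gaussians `g₁,...,g_n` and `1 ≤ m ≤ n`, the nonincreasing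
rearrangement `(gᵢ*)` of `(|gᵢ|)` satisfies
`c √(m log(en/m)) ≤ (E ∑_{i ≤ m} (gᵢ*)²)^{1/2} ≤ C √(m log(en/m))`, where the sum of the
`m` largest squares is expressed as the supremum of `∑_{i ∈ I} gᵢ²` over `|I| = m`. -/
theorem stmt14 : ∃ c > 0, ∃ C > 0, ∀ (Ω : Type) (_ : MeasurableSpace Ω) (μ : Measure Ω),
    IsProbabilityMeasure μ → ∀ (n : ℕ) (g : Fin n → Ω → ℝ), (∀ i, Measurable (g i)) →
    iIndepFun g μ →
    (∀ i, μ.map (g i) = gaussianReal 0 1) →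
    ∀ m : ℕ, 1 ≤ m → m ≤ n →
      c * Real.sqrt (m * Real.log (Real.exp 1 * n / m)) ≤
        Real.sqrt (∫ ω, (⨆ I : {I : Finset (Fin n) // I.card = m}, ∑ i ∈ I.1, g i ω ^ 2) ∂μ) ∧
      Real.sqrt (∫ ω, (⨆ I : {I : Finset (Fin n) // I.card = m}, ∑ i ∈ I.1, g i ω ^ 2) ∂μ) ≤
        C * Real.sqrt (m * Real.log (Real.exp 1 * n / m)) := by

  refine ⟨1/13, by norm_num, 3, by norm_num, ?_⟩
  intro Ω mΩ μ hprob n g hg hind hmap m hm1 hmn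
  haveI := hprob
  set L : ℝ := Real.log (Real.exp 1 * n / m) with hL_def
  have hm0 : 0 < (m:ℝ) := by exact_mod_cast hm1
  have hn0 : 0 < (n:ℝ) := lt_of_lt_of_le hm0 (by exact_mod_cast hmn)
  have hnm1 : (1:ℝ) ≤ (n:ℝ)/(m:ℝ) := (one_le_div hm0).2 (by exact_mod_cast hmn)
  have harg : Real.exp 1 * (n:ℝ) / (m:ℝ) = Real.exp 1 * ((n:ℝ)/(m:ℝ)) := by ring
  have hargpos : (0:ℝ) < Real.exp 1 * (n:ℝ) / (m:ℝ) := by positivity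
  have hL1 : 1 ≤ L := by
    rw [hL_def, harg, Real.log_mul (Real.exp_ne_zero 1) (by linarith), Real.log_exp]
    linarith [Real.log_nonneg hnm1]
  have hX0 : (0:ℝ) ≤ (m:ℝ) * L := by positivity
  obtain ⟨I0, -, hI0card⟩ := Finset.exists_subset_card_eq (s := (Finset.univ : Finset (Fin n))) (n := m)
    (by simpa using hmn)
  haveI : Nonempty {I : Finset (Fin n) // I.card = m} := ⟨⟨I0, hI0card⟩⟩
  set F : Ω → ℝ := fun ω => ⨆ I : {I : Finset (Fin n) // I.card = m}, ∑ i ∈ I.1, g i ω ^ 2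
    with hF_def
  have hbdd : ∀ ω : Ω, BddAbove (Set.range fun I : {I : Finset (Fin n) // I.card = m} =>
      ∑ i ∈ I.1, g i ω ^ 2) := fun ω => (Set.finite_range _).bddAbove
  have hFge : ∀ (ω : Ω) (I : {I : Finset (Fin n) // I.card = m}),
      ∑ i ∈ I.1, g i ω ^ 2 ≤ F ω := fun ω I => le_ciSup (hbdd ω) I
  have hFle : ∀ (ω : Ω) (a : ℝ),
      (∀ I : {I : Finset (Fin n) // I.card = m}, ∑ i ∈ I.1, g i ω ^ 2 ≤ a) →
      F ω ≤ a := fun ω a h => ciSup_le h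
  have hF0 : ∀ ω, 0 ≤ F ω := fun ω =>
    le_trans (Finset.sum_nonneg fun i _ => sq_nonneg _) (hFge ω ⟨I0, hI0card⟩)
  have hFmeas : Measurable F := by
    have h1 : F = fun ω => Finset.univ.sup' Finset.univ_nonempty
        (fun I : {I : Finset (Fin n) // I.card = m} => ∑ i ∈ I.1, g i ω ^ 2) := by
      ext ω; rw [Finset.sup'_univ_eq_ciSup]
    have hM : Measurable (Finset.univ.sup' Finset.univ_nonempty
        (fun (I : {I : Finset (Fin n) // I.card = m}) (ω : Ω) => ∑ i ∈ I.1, g i ω ^ 2)) :=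
      Finset.measurable_sup' _ fun I _ => by
        apply Finset.measurable_sum
        intro i _
        exact (hg i).pow_const 2
    have h2 : (fun ω => Finset.univ.sup' Finset.univ_nonempty
        (fun I : {I : Finset (Fin n) // I.card = m} => ∑ i ∈ I.1, g i ω ^ 2)) =
        Finset.univ.sup' Finset.univ_nonempty
        (fun (I : {I : Finset (Fin n) // I.card = m}) (ω : Ω) => ∑ i ∈ I.1, g i ω ^ 2) := by
      ext ω; rw [Finset.sup'_apply]
    rw [h1, h2]; exact hM
  have hsq_int : ∀ i : Fin n, Integrable (fun ω => g i ω ^ 2) μ := fun i =>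
    map_integrable (hg i) (hmap i) (by measurability) integrable_sq_gauss
  have hsum_int : Integrable (fun ω => ∑ i, g i ω ^ 2) μ :=
    integrable_finset_sum _ (fun i _ => hsq_int i)
  have hFint : Integrable F μ := by
    refine hsum_int.mono' hFmeas.aestronglyMeasurable
      (Filter.Eventually.of_forall fun ω => ?_)
    rw [Real.norm_eq_abs, abs_of_nonneg (hF0 ω)]
    exact hFle ω _ fun I => Finset.sum_le_sum_of_subset_of_nonneg (Finset.subset_univ _)
      (fun i _ _ => sq_nonneg _)
  -- UPPER BOUND
  have hintF_le : ∫ ω, F ω ∂μ ≤ 7 * ((m:ℝ) * L) := by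
    set s : ℝ := 4 * L with hs_def
    have hs0 : (0:ℝ) ≤ s := by rw [hs_def]; linarith
    have hups : ∀ ω, F ω ≤ (m:ℝ) * s + ∑ i, max (g i ω ^ 2 - s) 0 := by
      intro ω
      apply hFle
      intro I
      calc ∑ i ∈ I.1, g i ω ^ 2 ≤ ∑ i ∈ I.1, (s + max (g i ω ^ 2 - s) 0) := by
            apply Finset.sum_le_sum
            intro i _
            rcases le_total (g i ω ^ 2) s with h | h
            · have := le_max_right (g i ω ^ 2 - s) 0
              linarith
            · rw [max_eq_left (by linarith)]; linarith
      _ = (I.1.card : ℝ) * s + ∑ i ∈ I.1, max (g i ω ^ 2 - s) 0 := by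
            rw [Finset.sum_add_distrib, Finset.sum_const, nsmul_eq_mul]
      _ ≤ (m:ℝ) * s + ∑ i, max (g i ω ^ 2 - s) 0 := by
            rw [I.2]
            have := Finset.sum_le_sum_of_subset_of_nonneg (Finset.subset_univ I.1)
              (fun (i : Fin n) _ _ => le_max_right (g i ω ^ 2 - s) 0)
            linarith
    have hreluint : ∀ i : Fin n, Integrable (fun ω => max (g i ω ^ 2 - s) 0) μ :=
      fun i => integrable_relu_comp (hg i) (hmap i) hs0
    have hRHSint : Integrable (fun ω => (m:ℝ) * s + ∑ i, max (g i ω ^ 2 - s) 0) μ :=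
      (integrable_const _).add (integrable_finset_sum _ fun i _ => hreluint i)
    have h1 : ∫ ω, F ω ∂μ ≤ ∫ ω, ((m:ℝ) * s + ∑ i, max (g i ω ^ 2 - s) 0) ∂μ :=
      integral_mono hFint hRHSint hups
    rw [integral_add (integrable_const _) (integrable_finset_sum _ fun i _ => hreluint i),
      integral_const, integral_finset_sum _ (fun i _ => hreluint i)] at h1
    simp only [probReal_univ, measure_univ, ENNReal.toReal_one, smul_eq_mul, one_mul] at h1
    have h2 : ∑ i : Fin n, ∫ ω, max (g i ω ^ 2 - s) 0 ∂μ ≤ (n:ℝ) * (8 * rexp (-s/4)) := by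
      calc ∑ i : Fin n, ∫ ω, max (g i ω ^ 2 - s) 0 ∂μ
          ≤ ∑ _i : Fin n, 8 * rexp (-s/4) :=
            Finset.sum_le_sum fun i _ => integral_relu_comp_le (hg i) (hmap i) hs0
      _ = (n:ℝ) * (8 * rexp (-s/4)) := by
            rw [Finset.sum_const, Finset.card_univ, Fintype.card_fin, nsmul_eq_mul]
    have hexp : rexp (-s/4) = (m:ℝ) / (Real.exp 1 * n) := by
      rw [hs_def, show -(4*L)/4 = -L by ring, Real.exp_neg, hL_def,
        Real.exp_log hargpos, inv_div]
    have he1 : (2.7:ℝ) ≤ Real.exp 1 := by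
      have := Real.exp_one_gt_d9
      linarith
    have h3 : (n:ℝ) * (8 * rexp (-s/4)) ≤ 3 * m := by
      rw [hexp]
      rw [div_eq_mul_inv, mul_inv, show (n:ℝ) * (8 * ((m:ℝ) * ((Real.exp 1)⁻¹ * (n:ℝ)⁻¹)))
        = 8 * (m:ℝ) * (Real.exp 1)⁻¹ * ((n:ℝ) * (n:ℝ)⁻¹) by ring,
        mul_inv_cancel₀ (ne_of_gt hn0), mul_one]
      rw [mul_comm (8 * (m:ℝ)) _, ← div_eq_inv_mul, div_le_iff₀ (by positivity)]
      nlinarith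
    have hms : (m:ℝ) * s = 4 * ((m:ℝ) * L) := by rw [hs_def]; ring
    have h4 : (3:ℝ) * m ≤ 3 * ((m:ℝ) * L) := by nlinarith [hm0, hL1]
    linarith
  -- LOWER BOUND
  have hintF_ge : (m:ℝ) * L / 150 ≤ ∫ ω, F ω ∂μ := by
    set k : ℕ := n / m with hk_def
    have hmpos : 0 < m := hm1
    have hk1 : 1 ≤ k := (Nat.one_le_div_iff hmpos).2 hmn
    have hkm : k * m ≤ n := Nat.div_mul_le_self n m
    have hfj : ∀ (j : Fin m) (i : Fin k), j.1 * k + i.1 < n := by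
      intro j i
      have h2 : (j.1 + 1) * k ≤ m * k := Nat.mul_le_mul_right _ j.isLt
      have h3 : j.1 * k + i.1 < (j.1 + 1) * k := by
        rw [add_mul, one_mul]; omega
      have h4 : m * k ≤ n := by rw [mul_comm]; exact hkm
      omega
    set emb : ∀ j : Fin m, Fin k → Fin n :=
      fun j i => (⟨j.1 * k + i.1, hfj j i⟩ : Fin n) with hemb_def
    have hembinj : ∀ j, Function.Injective (emb j) := by
      intro j i1 i2 h
      have h2 := congrArg Fin.val h
      simp only [hemb_def] at h2
      exact Fin.ext (by omega)
    set G : Fin m → Finset (Fin n) := fun j => Finset.univ.image (emb j) with hG_def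
    have hGcard : ∀ j, (G j).card = k := by
      intro j
      rw [hG_def, Finset.card_image_of_injective _ (hembinj j), Finset.card_univ,
        Fintype.card_fin]
    have hGne : ∀ j, (G j).Nonempty := fun j => Finset.card_pos.1 (by rw [hGcard]; omega)
    have hGval : ∀ (j : Fin m) (i : Fin n), i ∈ G j → j.1 * k ≤ i.1 ∧ i.1 < j.1 * k + k := by
      intro j i hi
      rw [hG_def] at hi
      simp only [Finset.mem_image, Finset.mem_univ, true_and] at hi
      obtain ⟨a, ha⟩ := hi
      have h2 := congrArg Fin.val ha
      simp only [hemb_def] at h2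
      have h3 := a.isLt
      omega
    set M : Fin m → Ω → ℝ := fun j ω => (G j).sup' (hGne j) (fun i => g i ω ^ 2) with hM_def
    have hMle : ∀ ω, ∑ j, M j ω ≤ F ω := by
      intro ω
      have hch : ∀ j, ∃ i ∈ G j, (G j).sup' (hGne j) (fun i => g i ω ^ 2) = g i ω ^ 2 :=
        fun j => Finset.exists_mem_eq_sup' (hGne j) _
      choose a ha hval using hch
      have hainj : Function.Injective a := by
        intro j j' hjj
        have h1 := hGval _ _ (ha j)
        have h2 := hGval _ _ (ha j')
        rw [hjj] at h1
        refine Fin.ext ?_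
        by_contra hne
        rcases Nat.lt_or_ge j.1 j'.1 with h | h
        · have h5 : j.1 + 1 ≤ j'.1 := h
          have h6 := Nat.mul_le_mul_right k h5
          rw [add_mul, one_mul] at h6
          omega
        · have h5 : j'.1 + 1 ≤ j.1 := by omega
          have h6 := Nat.mul_le_mul_right k h5
          rw [add_mul, one_mul] at h6
          omega
      have hsum : ∑ i ∈ Finset.univ.image a, g i ω ^ 2 = ∑ j, M j ω := by
        rw [Finset.sum_image (fun j _ j' _ h => hainj h)]
        exact Finset.sum_congr rfl fun j _ => (hval j).symm
      have hIcard : (Finset.univ.image a).card = m := by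
        rw [Finset.card_image_of_injective _ hainj, Finset.card_univ, Fintype.card_fin]
      calc ∑ j, M j ω = ∑ i ∈ Finset.univ.image a, g i ω ^ 2 := hsum.symm
      _ ≤ F ω := hFge ω ⟨Finset.univ.image a, hIcard⟩
    have hMint : ∀ j, Integrable (M j) μ := fun j =>
      sup'_sq_integrable hg hmap (G j) (hGne j)
    have hlow : ∀ j, (1 + Real.log k) / 45 ≤ ∫ ω, M j ω ∂μ := by
      intro j
      have h := key_max hg hind hmap (G j) (hGne j)
      rwa [hGcard j] at h
    have h1 : ∫ ω, ∑ j, M j ω ∂μ ≤ ∫ ω, F ω ∂μ :=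
      integral_mono (integrable_finset_sum _ fun j _ => hMint j) hFint hMle
    rw [integral_finset_sum _ (fun j _ => hMint j)] at h1
    have h2 : (m:ℝ) * ((1 + Real.log k)/45) ≤ ∑ j, ∫ ω, M j ω ∂μ := by
      calc (m:ℝ) * ((1 + Real.log k)/45) = ∑ _j : Fin m, ((1 + Real.log k)/45) := by
            rw [Finset.sum_const, Finset.card_univ, Fintype.card_fin, nsmul_eq_mul]
      _ ≤ ∑ j, ∫ ω, M j ω ∂μ := Finset.sum_le_sum fun j _ => hlow j
    -- relate log k to L
    have hkreal : ((n:ℝ)/(m:ℝ))/2 ≤ (k:ℝ) := by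
      have hlt : n < (k + 1) * m := by
        rw [hk_def, add_mul, one_mul]
        have := Nat.lt_div_mul_add (a := n) hmpos
        omega
      have h1' : (n:ℝ) < ((k:ℝ) + 1) * m := by exact_mod_cast hlt
      have h2' : (1:ℝ) ≤ (k:ℝ) := by exact_mod_cast hk1
      rw [div_div, div_le_iff₀ (by positivity)]
      nlinarith
    clear hMle hMint hlow
    have hkpos : (0:ℝ) < (k:ℝ) := by positivity
    have hlogk : Real.log ((n:ℝ)/(m:ℝ)) - Real.log 2 ≤ Real.log (k:ℝ) := by
      rw [← Real.log_div (by positivity) (by norm_num)]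
      exact Real.log_le_log (by positivity) hkreal
    have hL_eq : L = 1 + Real.log ((n:ℝ)/(m:ℝ)) := by
      rw [hL_def, harg, Real.log_mul (Real.exp_ne_zero 1) (by positivity), Real.log_exp]
    have hl2 : Real.log 2 ≤ 0.7 := by
      have := Real.log_two_lt_d9
      linarith
    have hfrac : 0.3 * L ≤ 1 + Real.log (k:ℝ) := by nlinarith [hlogk, hl2, hL1, hL_eq]
    have h3 : (m:ℝ) * (0.3 * L) ≤ (m:ℝ) * (1 + Real.log (k:ℝ)) :=
      mul_le_mul_of_nonneg_left hfrac hm0.le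
    linarith
  -- CONCLUDE
  constructor
  · have hle : (m:ℝ) * L / 169 ≤ ∫ ω, F ω ∂μ := by
      have : (m:ℝ) * L / 169 ≤ (m:ℝ) * L / 150 := by
        gcongr
        norm_num
      linarith
    have h2 := Real.sqrt_le_sqrt hle
    rw [Real.sqrt_div hX0, show (169:ℝ) = 13^2 by norm_num,
      Real.sqrt_sq (by norm_num : (0:ℝ) ≤ 13)] at h2
    calc 1/13 * Real.sqrt ((m:ℝ) * L) = Real.sqrt ((m:ℝ) * L) / 13 := by ring
    _ ≤ Real.sqrt (∫ ω, F ω ∂μ) := h2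
  · have hle : ∫ ω, F ω ∂μ ≤ 9 * ((m:ℝ) * L) := by nlinarith
    have h2 := Real.sqrt_le_sqrt hle
    rw [Real.sqrt_mul (by norm_num : (0:ℝ) ≤ 9), show (9:ℝ) = 3^2 by norm_num,
      Real.sqrt_sq (by norm_num : (0:ℝ) ≤ 3)] at h2
    exact h2
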